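/- If N is an abelian normal subgroup of a finite group G and C is the centralizer of N in G, then the number of conjugacy classes of G satisfies k(G) ≥ k(G/C) + (|N| - 1)/|G : C|. -/

import Mathlib

/-- If `N` is an abelian normal subgroup of a finite group `G` and `C` is the
centralizer of `N` in `G`, then `k(G) ≥ k(G/C) + (|N| - 1)/|G : C|`. -/
theorem stmt_0 (G : Type*) [Group G] [Finite G] (N : Subgroup G) (hN : N.Normal)
    (hab : ∀ a b : G, a ∈ N → b ∈ N → a * b = b * a)
    [hC : (Subgroup.centralizer (N : Set G)).Normal] :
    (Nat.card (ConjClasses G) : ℝ) ≥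
      Nat.card (ConjClasses (G ⧸ Subgroup.centralizer (N : Set G))) +
        ((Nat.card N : ℝ) - 1) / (Subgroup.centralizer (N : Set G)).index := by
  classical
  set C := Subgroup.centralizer (N : Set G) with hCdef
  have hNC : N ≤ C := by
    intro a ha
    rw [hCdef, Subgroup.mem_centralizer_iff]
    intro b hb
    exact hab b a hb ha
  have hind : C.index ≠ 0 := Subgroup.index_ne_zero_of_finite
  -- conjugacy classes contained in N
  set S : Set (ConjClasses G) := {x | x.carrier ⊆ (N : Set G)} with hSdef
  set T : Set (ConjClasses G) := S \ {ConjClasses.mk 1} with hTdef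
  have hmkout : ∀ x : ConjClasses G, ConjClasses.mk (Quotient.out x) = x := by
    intro x
    rw [← ConjClasses.quotient_mk_eq_mk]
    exact Quotient.out_eq x
  have h1S : ConjClasses.mk (1 : G) ∈ S := by
    intro b hb
    rw [ConjClasses.mem_carrier_iff_mk_eq, ConjClasses.mk_eq_mk_iff_isConj,
      isConj_one_left] at hb
    subst hb; exact N.one_mem
  -- classes of elements of N are contained in N
  have hclass : ∀ n : G, n ∈ N → (ConjClasses.mk n).carrier ⊆ (N : Set G) := by
    intro n hn b hb
    rw [ConjClasses.mem_carrier_iff_mk_eq, ConjClasses.mk_eq_mk_iff_isConj] at hb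
    obtain ⟨c, hc⟩ := isConj_iff.mp hb.symm
    exact hc ▸ hN.conj_mem n hn c
  -- out of a class in S lies in N
  have houtN : ∀ x ∈ S, Quotient.out x ∈ N := by
    intro x hx
    apply hx
    rw [ConjClasses.mem_carrier_iff_mk_eq]
    exact hmkout x
  -- the covering surjection  T × (G ⧸ C) → N \ {1}
  have hFmem : ∀ x : ConjClasses G, x ∈ T → ∀ y : G ⧸ C,
      (Quotient.out y) * (Quotient.out x) * (Quotient.out y)⁻¹ ∈ ((N : Set G) \ {1}) := by
    intro x hx y
    set c := Quotient.out y
    set m := c * Quotient.out x * c⁻¹ with hm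
    have hmx : m ∈ x.carrier := by
      rw [ConjClasses.mem_carrier_iff_mk_eq, ← hmkout x,
        ConjClasses.mk_eq_mk_iff_isConj]
      exact (isConj_iff.mpr ⟨c, rfl⟩).symm
    refine ⟨hx.1 hmx, ?_⟩
    intro hm1
    apply hx.2
    simp only [Set.mem_singleton_iff] at hm1 ⊢
    have hout1 : Quotient.out x = 1 := by
      have h2 : c⁻¹ * m * c = Quotient.out x := by rw [hm]; group
      rw [hm1] at h2
      simpa using h2.symm
    rw [← hmkout x, hout1]
  let F : ↥T × (G ⧸ C) → ↥((N : Set G) \ {1}) := fun p =>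
    ⟨(Quotient.out p.2) * (Quotient.out (p.1 : ConjClasses G)) * (Quotient.out p.2)⁻¹,
      hFmem p.1 p.1.2 p.2⟩
  have hFsurj : Function.Surjective F := by
    rintro ⟨n, hnN, hn1⟩
    simp only [Set.mem_singleton_iff] at hn1
    have hxT : ConjClasses.mk n ∈ T := by
      constructor
      · exact hclass n hnN
      · simp only [Set.mem_singleton_iff, ConjClasses.mk_eq_mk_iff_isConj, isConj_one_left]
        exact hn1
    set x := ConjClasses.mk n with hxdef
    have hconj : IsConj (Quotient.out x) n := by
      rw [← ConjClasses.mk_eq_mk_iff_isConj, hmkout x]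
    obtain ⟨c, hc⟩ := isConj_iff.mp hconj
    set y : G ⧸ C := QuotientGroup.mk c with hy
    refine ⟨⟨⟨x, hxT⟩, y⟩, ?_⟩
    have hd : c⁻¹ * Quotient.out y ∈ C := by
      rw [← QuotientGroup.eq]
      exact (QuotientGroup.out_eq' y).symm
    set d := c⁻¹ * Quotient.out y with hdd
    have hyd : Quotient.out y = c * d := by rw [hdd]; group
    have hcomm : d * Quotient.out x = Quotient.out x * d := by
      have := Subgroup.mem_centralizer_iff.mp hd (Quotient.out x) (houtN x hxT.1)
      exact this.symm
    apply Subtype.ext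
    show Quotient.out y * Quotient.out x * (Quotient.out y)⁻¹ = n
    calc Quotient.out y * Quotient.out x * (Quotient.out y)⁻¹
        = c * (d * Quotient.out x * d⁻¹) * c⁻¹ := by rw [hyd]; group
      _ = c * Quotient.out x * c⁻¹ := by rw [hcomm]; group
      _ = n := hc
  -- cardinality bound from the covering
  have hTcount : Nat.card ↥((N : Set G) \ {1}) ≤ Nat.card ↥T * C.index := by
    have := Nat.card_le_card_of_surjective F hFsurj
    rwa [Nat.card_prod] at this
  have hNcard : Nat.card ↥((N : Set G) \ {1}) = Nat.card N - 1 := by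
    rw [Nat.card_coe_set_eq, Set.ncard_diff_singleton_of_mem N.one_mem,
      ← Nat.card_coe_set_eq]
    rfl
  -- the quotient map on conjugacy classes
  set f : ConjClasses G → ConjClasses (G ⧸ C) := ConjClasses.map (QuotientGroup.mk' C)
    with hfdef
  have hfsurj : Function.Surjective f :=
    ConjClasses.map_surjective (QuotientGroup.mk'_surjective C)
  have hfS : ∀ x ∈ S, f x = 1 := by
    intro x hx
    have hxout := houtN x hx
    rw [← hmkout x]
    show ConjClasses.mk (QuotientGroup.mk' C (Quotient.out x)) = 1
    rw [ConjClasses.one_eq_mk_one, ConjClasses.mk_eq_mk_iff_isConj]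
    have : QuotientGroup.mk' C (Quotient.out x) = 1 := by
      rw [QuotientGroup.mk'_apply, QuotientGroup.eq_one_iff]
      exact hNC hxout
    rw [this]
  -- embedding of nontrivial classes of G/C into Sᶜ
  have hcompl : Nat.card ↥({(1 : ConjClasses (G ⧸ C))}ᶜ : Set (ConjClasses (G ⧸ C)))
      ≤ Nat.card ↥(Sᶜ) := by
    let g : ↥({(1 : ConjClasses (G ⧸ C))}ᶜ : Set (ConjClasses (G ⧸ C))) → ↥(Sᶜ) :=
      fun b => ⟨Function.surjInv hfsurj b.1, fun hb => b.2 (by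
        rw [← Function.surjInv_eq hfsurj b.1]; exact hfS _ hb)⟩
    apply Nat.card_le_card_of_injective g
    intro b b' hbb
    apply Subtype.ext
    have := congrArg (fun z : ↥(Sᶜ) => f z.1) hbb
    simpa [g, Function.surjInv_eq hfsurj] using this
  -- assembling the natural-number inequality
  have hScard : Nat.card ↥S = Nat.card ↥T + 1 := by
    rw [Nat.card_coe_set_eq, Nat.card_coe_set_eq, hTdef,
      Set.ncard_diff_singleton_add_one h1S]
  have hSsum : Nat.card ↥S + Nat.card ↥(Sᶜ) = Nat.card (ConjClasses G) := by
    rw [Nat.card_coe_set_eq, Nat.card_coe_set_eq]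
    exact Set.ncard_add_ncard_compl S
  have hBsum : 1 + Nat.card ↥({(1 : ConjClasses (G ⧸ C))}ᶜ : Set (ConjClasses (G ⧸ C)))
      = Nat.card (ConjClasses (G ⧸ C)) := by
    rw [Nat.card_coe_set_eq]
    have := Set.ncard_add_ncard_compl ({(1 : ConjClasses (G ⧸ C))} : Set (ConjClasses (G ⧸ C)))
    rwa [Set.ncard_singleton] at this
  have hmain : Nat.card (ConjClasses (G ⧸ C)) + Nat.card ↥T ≤ Nat.card (ConjClasses G) := by
    omega
  -- now the real-number computation
  have hNT : ((Nat.card N : ℝ) - 1) / (C.index : ℝ) ≤ (Nat.card ↥T : ℝ) := by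
    rw [div_le_iff₀ (by positivity)]
    have hN1 : 1 ≤ Nat.card N := Nat.one_le_iff_ne_zero.mpr Nat.card_pos.ne'
    have : ((Nat.card N - 1 : ℕ) : ℝ) ≤ ((Nat.card ↥T * C.index : ℕ) : ℝ) := by
      exact_mod_cast hNcard ▸ hTcount
    rw [Nat.cast_sub hN1, Nat.cast_mul] at this
    simpa using this
  have hmainR : (Nat.card (ConjClasses (G ⧸ C)) : ℝ) + (Nat.card ↥T : ℝ)
      ≤ (Nat.card (ConjClasses G) : ℝ) := by exact_mod_cast hmain
  calc (Nat.card (ConjClasses (G ⧸ C)) : ℝ) + ((Nat.card N : ℝ) - 1) / (C.index : ℝ)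
      ≤ (Nat.card (ConjClasses (G ⧸ C)) : ℝ) + (Nat.card ↥T : ℝ) := by linarith
    _ ≤ (Nat.card (ConjClasses G) : ℝ) := hmainR
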